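/- Let p_1 < p_2 < ... < p_n be distinct positive real numbers and let r be an odd positive integer with r ≤ n. Then the inertia of the Kwong matrix K_r(p_1,...,p_n) equals (⌈r/2⌉, n−r, ⌊r/2⌋) if r ≡ 1 (mod 4), and equals (⌊r/2⌋, n−r, ⌈r/2⌉) if r ≡ 3 (mod 4). -/

import Mathlib

open Matrix Finset

/-- The Kwong matrix: (i,j) entry is `(p i ^ r + p j ^ r) / (p i + p j)`. -/
noncomputable def kwong {n : ℕ} (p : Fin n → ℝ) (r : ℝ) : Matrix (Fin n) (Fin n) ℝ :=
  Matrix.of fun i j => (p i ^ r + p j ^ r) / (p i + p j)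

lemma kwong_isHermitian {n : ℕ} (p : Fin n → ℝ) (r : ℝ) : (kwong p r).IsHermitian := by
  ext i j
  simp only [kwong, Matrix.conjTranspose_apply, Matrix.of_apply, star_trivial]
  rw [add_comm (p j ^ r), add_comm (p j)]

/-- The inertia of a real symmetric matrix: the numbers of positive, zero and
negative eigenvalues, counted with multiplicity. -/
noncomputable def inertia {n : ℕ} (A : Matrix (Fin n) (Fin n) ℝ) (hA : A.IsHermitian) :
    ℕ × ℕ × ℕ :=
  ({i | 0 < hA.eigenvalues i}.ncard, {i | hA.eigenvalues i = 0}.ncard,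
    {i | hA.eigenvalues i < 0}.ncard)

/-! ### Auxiliary lemmas -/

lemma quad_expand' {n : ℕ} {A : Matrix (Fin n) (Fin n) ℝ} (hA : A.IsHermitian) (x : Fin n → ℝ) :
    x ⬝ᵥ A *ᵥ x = ∑ i, hA.eigenvalues i *
      ((star (hA.eigenvectorUnitary : Matrix (Fin n) (Fin n) ℝ) *ᵥ x) i)^2 := by
  set U : Matrix (Fin n) (Fin n) ℝ := (hA.eigenvectorUnitary : Matrix (Fin n) (Fin n) ℝ)
  have hspec := hA.spectral_theorem
  conv_lhs => rw [hspec, Unitary.conjStarAlgAut_apply]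
  have hstar : star U = Uᵀ := by
    ext i j; simp [conjTranspose_apply, star_trivial]
  rw [← mulVec_mulVec, ← mulVec_mulVec, dotProduct_mulVec x U, hstar, ← mulVec_transpose]
  simp [dotProduct, mulVec_diagonal]
  exact Finset.sum_congr rfl fun i _ => by ring

lemma aux_le_card_pos' {n : ℕ} {A : Matrix (Fin n) (Fin n) ℝ} (hA : A.IsHermitian)
    {ι : Type} [Fintype ι] (T : (ι → ℝ) →ₗ[ℝ] (Fin n → ℝ))
    (hq : ∀ c : ι → ℝ, c ≠ 0 → 0 < (T c) ⬝ᵥ A *ᵥ (T c)) :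
    Fintype.card ι ≤ Fintype.card {i // 0 < hA.eigenvalues i} := by
  set U : Matrix (Fin n) (Fin n) ℝ := (hA.eigenvectorUnitary : Matrix (Fin n) (Fin n) ℝ)
  set Φ : (ι → ℝ) →ₗ[ℝ] ({i // 0 < hA.eigenvalues i} → ℝ) :=
    (LinearMap.funLeft ℝ ℝ Subtype.val) ∘ₗ (Matrix.mulVecLin (star U)) ∘ₗ T with hΦ
  have hΦap : ∀ (c : ι → ℝ) (j : {i // 0 < hA.eigenvalues i}),
      Φ c j = ((star U) *ᵥ (T c)) j.val := fun c j => rfl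
  have hker : ∀ c : ι → ℝ, Φ c = 0 → c = 0 := by
    intro c hc
    by_contra hc0
    have h1 := hq c hc0
    rw [quad_expand' hA] at h1
    have h2 : ∀ i : Fin n, hA.eigenvalues i * ((star U *ᵥ T c) i)^2 ≤ 0 := by
      intro i
      rcases lt_or_ge 0 (hA.eigenvalues i) with h | h
      · have : (star U *ᵥ T c) i = 0 := by
          rw [← hΦap c ⟨i, h⟩, hc]; rfl
        rw [this]; simp
      · nlinarith [sq_nonneg ((star U *ᵥ T c) i)]
    have := Finset.sum_nonpos (fun i (_ : i ∈ Finset.univ) => h2 i)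
    linarith
  have hinj : Function.Injective Φ := by
    rw [← LinearMap.ker_eq_bot, LinearMap.ker_eq_bot']
    intro c hc; exact hker c hc
  calc Fintype.card ι = Module.finrank ℝ (ι → ℝ) := by simp
    _ ≤ Module.finrank ℝ ({i // 0 < hA.eigenvalues i} → ℝ) :=
        LinearMap.finrank_le_finrank_of_injective hinj
    _ = Fintype.card {i // 0 < hA.eigenvalues i} := by simp

lemma aux_le_card_neg' {n : ℕ} {A : Matrix (Fin n) (Fin n) ℝ} (hA : A.IsHermitian)
    {ι : Type} [Fintype ι] (T : (ι → ℝ) →ₗ[ℝ] (Fin n → ℝ))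
    (hq : ∀ c : ι → ℝ, c ≠ 0 → (T c) ⬝ᵥ A *ᵥ (T c) < 0) :
    Fintype.card ι ≤ Fintype.card {i // hA.eigenvalues i < 0} := by
  set U : Matrix (Fin n) (Fin n) ℝ := (hA.eigenvectorUnitary : Matrix (Fin n) (Fin n) ℝ)
  set Φ : (ι → ℝ) →ₗ[ℝ] ({i // hA.eigenvalues i < 0} → ℝ) :=
    (LinearMap.funLeft ℝ ℝ Subtype.val) ∘ₗ (Matrix.mulVecLin (star U)) ∘ₗ T with hΦ
  have hΦap : ∀ (c : ι → ℝ) (j : {i // hA.eigenvalues i < 0}),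
      Φ c j = ((star U) *ᵥ (T c)) j.val := fun c j => rfl
  have hker : ∀ c : ι → ℝ, Φ c = 0 → c = 0 := by
    intro c hc
    by_contra hc0
    have h1 := hq c hc0
    rw [quad_expand' hA] at h1
    have h2 : ∀ i : Fin n, 0 ≤ hA.eigenvalues i * ((star U *ᵥ T c) i)^2 := by
      intro i
      rcases lt_or_ge (hA.eigenvalues i) 0 with h | h
      · have : (star U *ᵥ T c) i = 0 := by
          rw [← hΦap c ⟨i, h⟩, hc]; rfl
        rw [this]; simp
      · nlinarith [sq_nonneg ((star U *ᵥ T c) i)]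
    have := Finset.sum_nonneg (fun i (_ : i ∈ Finset.univ) => h2 i)
    linarith
  have hinj : Function.Injective Φ := by
    rw [← LinearMap.ker_eq_bot, LinearMap.ker_eq_bot']
    intro c hc; exact hker c hc
  calc Fintype.card ι = Module.finrank ℝ (ι → ℝ) := by simp
    _ ≤ Module.finrank ℝ ({i // hA.eigenvalues i < 0} → ℝ) :=
        LinearMap.finrank_le_finrank_of_injective hinj
    _ = Fintype.card {i // hA.eigenvalues i < 0} := by simp

lemma npp' {m k : ℕ} (hk : k ≤ 2*m) : (-1:ℝ)^(2*m-k) = (-1)^k := by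
  rcases Nat.even_or_odd k with h | h
  · obtain ⟨j, hj⟩ := h
    have h2 : Even (2*m-k) := ⟨m - j, by omega⟩
    rw [h2.neg_one_pow, (Even.neg_one_pow ⟨j, hj⟩ : (-1:ℝ)^k = 1)]
  · obtain ⟨j, hj⟩ := h
    have h2 : Odd (2*m-k) := ⟨m - j - 1, by omega⟩
    rw [h2.neg_one_pow, (Odd.neg_one_pow ⟨j, hj⟩ : (-1:ℝ)^k = -1)]

lemma key_sum' (m : ℕ) (t : ℕ → ℝ) :
    ∑ k ∈ range (2*m+1), (-1:ℝ)^k * (t k * t (2*m - k))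
    = ((∑ k ∈ range m, ((t k + (-1)^k * t (2*m-k)) / Real.sqrt 2)^2)
        + (-1)^m * t m ^ 2)
      - ∑ k ∈ range m, ((t (2*m-k) - (-1)^k * t k) / Real.sqrt 2)^2 := by
  have hs : (Real.sqrt 2)^2 = 2 := Real.sq_sqrt (by norm_num)
  have hsplit : ∑ k ∈ range (2*m+1), (-1:ℝ)^k * (t k * t (2*m - k))
      = (∑ k ∈ range m, (-1:ℝ)^k * (t k * t (2*m - k)))
        + ((-1:ℝ)^m * (t m * t m)
        + ∑ k ∈ range m, (-1:ℝ)^(2*m-k) * (t (2*m-k) * t k)) := by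
    have h1 : 2*m+1 = m + (m+1) := by omega
    rw [h1, Finset.sum_range_add]
    congr 1
    rw [Finset.sum_range_succ']
    have h2 : ∀ k ∈ range m, (-1:ℝ)^(m+(k+1)) * (t (m+(k+1)) * t (2*m - (m+(k+1))))
        = (fun j => (-1:ℝ)^(m+1+j) * (t (m+1+j) * t (m-1-j))) k := by
      intro k hk
      have e1 : m+(k+1) = m+1+k := by omega
      have e2 : 2*m - (m+1+k) = m-1-k := by omega
      simp only [e1, e2]
    rw [Finset.sum_congr rfl h2, ← Finset.sum_range_reflect]
    have h3 : ∀ k ∈ range m, (-1:ℝ)^(m+1+(m-1-k)) * (t (m+1+(m-1-k)) * t (m-1-(m-1-k)))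
        = (-1:ℝ)^(2*m-k) * (t (2*m-k) * t k) := by
      intro k hk
      simp only [mem_range] at hk
      have e1 : m+1+(m-1-k) = 2*m-k := by omega
      have e2 : m-1-(m-1-k) = k := by omega
      rw [e1, e2]
    rw [Finset.sum_congr rfl h3, show m + 0 = m from rfl, show 2*m - m = m from by omega]
    ring
  rw [hsplit]
  have hterm : ∀ k ∈ range m,
      ((t k + (-1:ℝ)^k * t (2*m-k)) / Real.sqrt 2)^2
        - ((t (2*m-k) - (-1:ℝ)^k * t k) / Real.sqrt 2)^2
      = (-1:ℝ)^k * (t k * t (2*m - k)) + (-1:ℝ)^(2*m-k) * (t (2*m-k) * t k) := by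
    intro k hk
    simp only [mem_range] at hk
    have h6 : ((-1:ℝ)^k)^2 = 1 := by rw [← pow_mul, mul_comm, pow_mul]; norm_num
    have h4 : (-1:ℝ)^(2*m-k) = (-1:ℝ)^k := npp' (by omega)
    rw [h4, div_pow, div_pow, hs]
    linear_combination (t (2*m-k)^2 - t k^2)/2 * h6
  have hAB : ∑ k ∈ range m, (((t k + (-1:ℝ)^k * t (2*m-k)) / Real.sqrt 2)^2
        - ((t (2*m-k) - (-1:ℝ)^k * t k) / Real.sqrt 2)^2)
      = (∑ k ∈ range m, (-1:ℝ)^k * (t k * t (2*m - k)))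
        + ∑ k ∈ range m, (-1:ℝ)^(2*m-k) * (t (2*m-k) * t k) := by
    rw [Finset.sum_congr rfl hterm, Finset.sum_add_distrib]
  rw [Finset.sum_sub_distrib] at hAB
  have hm : (-1:ℝ)^m * (t m * t m) = (-1:ℝ)^m * t m ^2 := by ring
  linarith [hAB]

lemma kwong_entry' {n : ℕ} (p : Fin n → ℝ) (hpos : ∀ i, 0 < p i) (m : ℕ) (i j : Fin n) :
    kwong p ((2*m+1 : ℕ) : ℝ) i j
      = ∑ k ∈ Finset.range (2*m+1), (-1:ℝ)^k * (p i ^ k * p j ^ (2*m - k)) := by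
  have hij : p i + p j ≠ 0 := ne_of_gt (add_pos (hpos i) (hpos j))
  have hodd : Odd (2*m+1) := ⟨m, by ring⟩
  have hg := geom_sum₂_mul (-p i) (p j) (2*m+1)
  simp only [kwong, Matrix.of_apply]
  rw [Real.rpow_natCast, Real.rpow_natCast, div_eq_iff hij]
  symm
  have hneg : ((-p i) ^ (2*m+1) : ℝ) = -(p i ^ (2*m+1)) := hodd.neg_pow _
  have hS : ∀ k ∈ range (2*m+1), ((-p i) ^ k * p j ^ (2*m+1-1-k) : ℝ)
      = (-1:ℝ)^k * (p i ^ k * p j ^ (2*m - k)) := by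
    intro k hk
    rw [neg_pow]
    have : 2*m+1-1-k = 2*m-k := by omega
    rw [this]; ring
  rw [Finset.sum_congr rfl hS] at hg
  rw [hneg] at hg
  calc (∑ k ∈ range (2*m+1), (-1:ℝ)^k * (p i ^ k * p j ^ (2*m - k))) * (p i + p j)
      = -((∑ k ∈ range (2*m+1), (-1:ℝ)^k * (p i ^ k * p j ^ (2*m - k))) * (-p i - p j)) := by
        ring
    _ = -(-(p i ^ (2*m+1)) - p j ^ (2*m+1)) := by rw [hg]
    _ = p i ^ (2*m+1) + p j ^ (2*m+1) := by ring

lemma kwong_fact' {n : ℕ} (p : Fin n → ℝ) (hpos : ∀ i, 0 < p i) (m : ℕ) :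
    kwong p ((2*m+1 : ℕ) : ℝ) =
      (Matrix.of fun (i : Fin n) (k : Fin (2*m+1)) => (-1:ℝ)^(k:ℕ) * p i ^ (k:ℕ))
      * (Matrix.of fun (j : Fin n) (k : Fin (2*m+1)) => p j ^ (2*m - (k:ℕ)))ᵀ := by
  ext i j
  rw [kwong_entry' p hpos m i j, Matrix.mul_apply]
  rw [← Fin.sum_univ_eq_sum_range (fun k => (-1:ℝ)^k * (p i ^ k * p j ^ (2*m - k)))]
  exact Finset.sum_congr rfl fun k _ => by
    simp [Matrix.transpose_apply]; ring

lemma kwong_rank' {n : ℕ} (p : Fin n → ℝ) (hpos : ∀ i, 0 < p i) (m : ℕ) :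
    (kwong p ((2*m+1 : ℕ) : ℝ)).rank ≤ 2*m+1 := by
  rw [kwong_fact' p hpos m]
  exact le_trans (Matrix.rank_mul_le_left _ _)
    (le_trans (Matrix.rank_le_card_width _) (by simp))

lemma kwong_qf' {n : ℕ} (p : Fin n → ℝ) (hpos : ∀ i, 0 < p i) (m : ℕ) (x : Fin n → ℝ) :
    x ⬝ᵥ (kwong p ((2*m+1 : ℕ) : ℝ)) *ᵥ x
      = ∑ k ∈ Finset.range (2*m+1), (-1:ℝ)^k *
          (((fun i => p i ^ k) ⬝ᵥ x) * ((fun i => p i ^ (2*m-k)) ⬝ᵥ x)) := by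
  rw [kwong_fact' p hpos m, ← Matrix.mulVec_mulVec, Matrix.dotProduct_mulVec]
  rw [← Fin.sum_univ_eq_sum_range (fun k => (-1:ℝ)^k *
          (((fun i => p i ^ k) ⬝ᵥ x) * ((fun i => p i ^ (2*m-k)) ⬝ᵥ x)))]
  simp only [dotProduct, vecMul, mulVec, Matrix.transpose_apply, Matrix.of_apply]
  refine Finset.sum_congr rfl fun k _ => ?_
  have hC : (∑ j, x j * ((-1:ℝ)^(k:ℕ) * p j ^ (k:ℕ)))
      = (-1:ℝ)^(k:ℕ) * ∑ j, p j ^ (k:ℕ) * x j := by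
    rw [Finset.mul_sum]
    exact Finset.sum_congr rfl fun j _ => by ring
  rw [hC]
  ring

noncomputable def dualW {n : ℕ} (r : ℕ) (p : Fin n → ℝ) (hrn : r ≤ n) : Fin r → Fin n → ℝ :=
  fun t i => if h : (i:ℕ) < r then
    ((Matrix.vandermonde (fun i : Fin r => p (Fin.castLE hrn i)))ᵀ)⁻¹ ⟨i, h⟩ t else 0

lemma dual_spec' {n : ℕ} (r : ℕ) (p : Fin n → ℝ) (hmono : StrictMono p) (hrn : r ≤ n)
    (k t : Fin r) :
    (fun i => p i ^ (k:ℕ)) ⬝ᵥ dualW r p hrn t = if k = t then 1 else 0 := by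
  set B := Matrix.vandermonde (fun i : Fin r => p (Fin.castLE hrn i)) with hB
  have hdet : B.det ≠ 0 := by
    rw [Matrix.det_vandermonde_ne_zero_iff]
    exact hmono.injective.comp (Fin.castLE_injective hrn)
  have hdetT : Bᵀ.det ≠ 0 := by rwa [Matrix.det_transpose]
  have hmul : Bᵀ * (Bᵀ)⁻¹ = 1 := Matrix.mul_nonsing_inv _ (isUnit_iff_ne_zero.mpr hdetT)
  set s : Finset (Fin n) := Finset.univ.map ⟨Fin.castLE hrn, Fin.castLE_injective hrn⟩ with hs
  have hzero : ∀ i ∈ Finset.univ, i ∉ s →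
      p i ^ (k:ℕ) * dualW r p hrn t i = 0 := by
    intro i _ hi
    have : ¬ ((i:ℕ) < r) := by
      intro h
      exact hi (by simp [hs, Finset.mem_map]; exact ⟨⟨i, h⟩, Fin.ext rfl⟩)
    simp [dualW, this]
  have h1 : (fun i => p i ^ (k:ℕ)) ⬝ᵥ dualW r p hrn t
      = ∑ i ∈ s, p i ^ (k:ℕ) * dualW r p hrn t i :=
    (Finset.sum_subset (Finset.subset_univ s) hzero).symm
  rw [h1, hs, Finset.sum_map]
  have h2 : ∀ j : Fin r, p (Fin.castLE hrn j) ^ (k:ℕ) * dualW r p hrn t (Fin.castLE hrn j)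
      = Bᵀ k j * (Bᵀ)⁻¹ j t := by
    intro j
    have hj : ((Fin.castLE hrn j : Fin n) : ℕ) < r := j.isLt
    simp only [dualW, dif_pos hj]
    congr 1
  simp only [Function.Embedding.coeFn_mk]
  rw [Finset.sum_congr rfl (fun j _ => h2 j)]
  rw [← Matrix.mul_apply, hmul, Matrix.one_apply]

lemma dotProduct_sum' {n : ℕ} {ι : Type*} (s : Finset ι) (u : Fin n → ℝ) (y : ι → Fin n → ℝ) :
    u ⬝ᵥ (∑ t ∈ s, y t) = ∑ t ∈ s, u ⬝ᵥ y t := by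
  simp only [dotProduct, Finset.sum_apply, Finset.mul_sum]
  rw [Finset.sum_comm]
lemma block_pos {n m a : ℕ} (p : Fin n → ℝ) (hpos : ∀ i, 0 < p i) (hmono : StrictMono p)
    (hrn : 2*m+1 ≤ n) (hA : (kwong p ((2*m+1:ℕ):ℝ)).IsHermitian)
    (h0 : 0 < a) (hma : m ≤ a) (ham : a ≤ m+1) (hev : a = m+1 → Even m) :
    a ≤ Fintype.card {i // 0 < hA.eigenvalues i} := by
  set w : Fin (2*m+1) → Fin n → ℝ := dualW (2*m+1) p hrn with hw
  set H : ℕ → Fin a := fun k => ⟨min (min k (2*m-k)) (a-1), by omega⟩ with hH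
  set G : ℕ → ℝ := fun k => if k = m then (if a = m+1 then 1 else 0)
    else if k < m then (Real.sqrt 2)⁻¹ else (-1)^k * (Real.sqrt 2)⁻¹ with hG
  set T : (Fin a → ℝ) →ₗ[ℝ] (Fin n → ℝ) :=
    ∑ t : Fin (2*m+1), LinearMap.smulRight
      (G (t:ℕ) • (LinearMap.proj (H (t:ℕ)) : (Fin a → ℝ) →ₗ[ℝ] ℝ)) (w t) with hT
  have hTc : ∀ c : Fin a → ℝ, T c = ∑ t : Fin (2*m+1), (G (t:ℕ) * c (H (t:ℕ))) • w t := by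
    intro c
    rw [hT, LinearMap.sum_apply]
    exact Finset.sum_congr rfl fun t _ => rfl
  have hval : ∀ (c : Fin a → ℝ) (k : ℕ) (hk : k < 2*m+1),
      (fun i => p i ^ k) ⬝ᵥ (T c) = G k * c (H k) := by
    intro c k hk
    rw [hTc, dotProduct_sum']
    have hterm : ∀ t : Fin (2*m+1), (fun i => p i ^ k) ⬝ᵥ ((G (t:ℕ) * c (H (t:ℕ))) • w t)
        = (G (t:ℕ) * c (H (t:ℕ))) * (if (⟨k, hk⟩ : Fin (2*m+1)) = t then 1 else 0) := by
      intro t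
      rw [dotProduct_smul, smul_eq_mul, ← dual_spec' (2*m+1) p hmono hrn ⟨k, hk⟩ t]
    rw [Finset.sum_congr rfl fun t _ => hterm t]
    simp [Finset.sum_ite_eq]
  have hsq : Real.sqrt 2 * Real.sqrt 2 = 2 := Real.mul_self_sqrt (by norm_num)
  have hs0 : Real.sqrt 2 ≠ 0 := by positivity
  refine le_trans (le_of_eq (Fintype.card_fin a).symm) (aux_le_card_pos' hA T ?_)
  intro c hc
  rw [kwong_qf' p hpos m (T c),
    key_sum' m (fun k => (fun i => p i ^ k) ⬝ᵥ (T c))]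
  have e1 : ∀ k ∈ range m,
      (((fun i => p i ^ k) ⬝ᵥ T c + (-1:ℝ)^k * ((fun i => p i ^ (2*m-k)) ⬝ᵥ T c))
        / Real.sqrt 2)^2 = (c (H k))^2 := by
    intro k hk
    simp only [mem_range] at hk
    rw [hval c k (by omega), hval c (2*m-k) (by omega)]
    have hGk : G k = (Real.sqrt 2)⁻¹ := by
      simp only [hG]; rw [if_neg (by omega), if_pos hk]
    have hGk2 : G (2*m-k) = (-1)^(2*m-k) * (Real.sqrt 2)⁻¹ := by
      simp only [hG]; rw [if_neg (by omega), if_neg (by omega)]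
    have hHk : H (2*m-k) = H k := by
      simp only [hH]; exact Fin.ext (by simp; omega)
    rw [hGk, hGk2, hHk, npp' (by omega : k ≤ 2*m)]
    rcases Nat.even_or_odd k with hpar | hpar
    · simp only [(hpar.neg_one_pow : (-1:ℝ)^k = 1)]
      field_simp
      rw [show Real.sqrt 2 ^ 4 = (Real.sqrt 2 * Real.sqrt 2)^2 by ring, hsq]; ring
    · simp only [(hpar.neg_one_pow : (-1:ℝ)^k = -1)]
      field_simp
      rw [show Real.sqrt 2 ^ 4 = (Real.sqrt 2 * Real.sqrt 2)^2 by ring, hsq]; ring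
  have e2 : ∀ k ∈ range m,
      (((fun i => p i ^ (2*m-k)) ⬝ᵥ T c - (-1:ℝ)^k * ((fun i => p i ^ k) ⬝ᵥ T c))
        / Real.sqrt 2)^2 = 0 := by
    intro k hk
    simp only [mem_range] at hk
    rw [hval c k (by omega), hval c (2*m-k) (by omega)]
    have hGk : G k = (Real.sqrt 2)⁻¹ := by
      simp only [hG]; rw [if_neg (by omega), if_pos hk]
    have hGk2 : G (2*m-k) = (-1)^(2*m-k) * (Real.sqrt 2)⁻¹ := by
      simp only [hG]; rw [if_neg (by omega), if_neg (by omega)]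
    have hHk : H (2*m-k) = H k := by
      simp only [hH]; exact Fin.ext (by simp; omega)
    rw [hGk, hGk2, hHk, npp' (by omega : k ≤ 2*m)]
    rcases Nat.even_or_odd k with hpar | hpar
    · simp only [(hpar.neg_one_pow : (-1:ℝ)^k = 1)]
      ring
    · simp only [(hpar.neg_one_pow : (-1:ℝ)^k = -1)]
      ring
  have emid : (-1:ℝ)^m * ((fun i => p i ^ m) ⬝ᵥ T c)^2
      = (if a = m+1 then (c (H m))^2 else 0) := by
    rw [hval c m (by omega)]
    by_cases hcase : a = m+1
    · have hGm : G m = 1 := by simp [hG, hcase]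
      have hevm : Even m := hev hcase
      rw [hGm, if_pos hcase, hevm.neg_one_pow]
      ring
    · have hGm : G m = 0 := by simp [hG, hcase]
      rw [hGm, if_neg hcase]
      ring
  rw [Finset.sum_congr rfl e1, Finset.sum_congr rfl e2, emid]
  simp only [Finset.sum_const_zero, sub_zero]
  -- goal : 0 < ∑ k ∈ range m, c (H k)^2 + (if a = m+1 then c (H m)^2 else 0)
  obtain ⟨i, hi⟩ : ∃ i, c i ≠ 0 := Function.ne_iff.mp hc
  have hnn : 0 ≤ ∑ k ∈ range m, (c (H k))^2 :=
    Finset.sum_nonneg fun k _ => sq_nonneg _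
  have hHi : H (i : ℕ) = i := by
    simp only [hH]
    exact Fin.ext (by simp; omega)
  rcases lt_or_ge (i:ℕ) m with him | him
  · have hle : (c (H (i:ℕ)))^2 ≤ ∑ k ∈ range m, (c (H k))^2 :=
      Finset.single_le_sum (f := fun k => (c (H k))^2) (fun k _ => sq_nonneg _)
        (Finset.mem_range.mpr him)
    rw [hHi] at hle
    have : 0 < (c i)^2 := by positivity
    have hif : (0:ℝ) ≤ (if a = m+1 then (c (H m))^2 else 0) := by
      split <;> positivity
    linarith
  · -- i.val = m, so a = m+1
    have hia : (i:ℕ) = m := by omega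
    have hcase : a = m+1 := by omega
    rw [if_pos hcase]
    have hHm : H m = i := by rw [← hia, hHi]
    rw [hHm]
    have : 0 < (c i)^2 := by positivity
    linarith
lemma block_neg {n m a : ℕ} (p : Fin n → ℝ) (hpos : ∀ i, 0 < p i) (hmono : StrictMono p)
    (hrn : 2*m+1 ≤ n) (hA : (kwong p ((2*m+1:ℕ):ℝ)).IsHermitian)
    (h0 : 0 < a) (hma : m ≤ a) (ham : a ≤ m+1) (hev : a = m+1 → Odd m) :
    a ≤ Fintype.card {i // hA.eigenvalues i < 0} := by
  set w : Fin (2*m+1) → Fin n → ℝ := dualW (2*m+1) p hrn with hw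
  set H : ℕ → Fin a := fun k => ⟨min (min k (2*m-k)) (a-1), by omega⟩ with hH
  set G : ℕ → ℝ := fun k => if k = m then (if a = m+1 then 1 else 0)
    else if k < m then -(-1)^k * (Real.sqrt 2)⁻¹ else (Real.sqrt 2)⁻¹ with hG
  set T : (Fin a → ℝ) →ₗ[ℝ] (Fin n → ℝ) :=
    ∑ t : Fin (2*m+1), LinearMap.smulRight
      (G (t:ℕ) • (LinearMap.proj (H (t:ℕ)) : (Fin a → ℝ) →ₗ[ℝ] ℝ)) (w t) with hT
  have hTc : ∀ c : Fin a → ℝ, T c = ∑ t : Fin (2*m+1), (G (t:ℕ) * c (H (t:ℕ))) • w t := by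
    intro c
    rw [hT, LinearMap.sum_apply]
    exact Finset.sum_congr rfl fun t _ => rfl
  have hval : ∀ (c : Fin a → ℝ) (k : ℕ) (hk : k < 2*m+1),
      (fun i => p i ^ k) ⬝ᵥ (T c) = G k * c (H k) := by
    intro c k hk
    rw [hTc, dotProduct_sum']
    have hterm : ∀ t : Fin (2*m+1), (fun i => p i ^ k) ⬝ᵥ ((G (t:ℕ) * c (H (t:ℕ))) • w t)
        = (G (t:ℕ) * c (H (t:ℕ))) * (if (⟨k, hk⟩ : Fin (2*m+1)) = t then 1 else 0) := by
      intro t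
      rw [dotProduct_smul, smul_eq_mul, ← dual_spec' (2*m+1) p hmono hrn ⟨k, hk⟩ t]
    rw [Finset.sum_congr rfl fun t _ => hterm t]
    simp [Finset.sum_ite_eq]
  have hsq : Real.sqrt 2 * Real.sqrt 2 = 2 := Real.mul_self_sqrt (by norm_num)
  have hs0 : Real.sqrt 2 ≠ 0 := by positivity
  refine le_trans (le_of_eq (Fintype.card_fin a).symm) (aux_le_card_neg' hA T ?_)
  intro c hc
  rw [kwong_qf' p hpos m (T c),
    key_sum' m (fun k => (fun i => p i ^ k) ⬝ᵥ (T c))]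
  have e1 : ∀ k ∈ range m,
      (((fun i => p i ^ k) ⬝ᵥ T c + (-1:ℝ)^k * ((fun i => p i ^ (2*m-k)) ⬝ᵥ T c))
        / Real.sqrt 2)^2 = 0 := by
    intro k hk
    simp only [mem_range] at hk
    rw [hval c k (by omega), hval c (2*m-k) (by omega)]
    have hGk : G k = -(-1)^k * (Real.sqrt 2)⁻¹ := by
      simp only [hG]; rw [if_neg (by omega), if_pos hk]
    have hGk2 : G (2*m-k) = (Real.sqrt 2)⁻¹ := by
      simp only [hG]; rw [if_neg (by omega), if_neg (by omega)]
    have hHk : H (2*m-k) = H k := by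
      simp only [hH]; exact Fin.ext (by simp; omega)
    rw [hGk, hGk2, hHk]
    ring
  have e2 : ∀ k ∈ range m,
      (((fun i => p i ^ (2*m-k)) ⬝ᵥ T c - (-1:ℝ)^k * ((fun i => p i ^ k) ⬝ᵥ T c))
        / Real.sqrt 2)^2 = (c (H k))^2 := by
    intro k hk
    simp only [mem_range] at hk
    rw [hval c k (by omega), hval c (2*m-k) (by omega)]
    have hGk : G k = -(-1)^k * (Real.sqrt 2)⁻¹ := by
      simp only [hG]; rw [if_neg (by omega), if_pos hk]
    have hGk2 : G (2*m-k) = (Real.sqrt 2)⁻¹ := by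
      simp only [hG]; rw [if_neg (by omega), if_neg (by omega)]
    have hHk : H (2*m-k) = H k := by
      simp only [hH]; exact Fin.ext (by simp; omega)
    rw [hGk, hGk2, hHk]
    rcases Nat.even_or_odd k with hpar | hpar
    · simp only [(hpar.neg_one_pow : (-1:ℝ)^k = 1)]
      field_simp
      rw [show Real.sqrt 2 ^ 4 = (Real.sqrt 2 * Real.sqrt 2)^2 by ring, hsq]; ring
    · simp only [(hpar.neg_one_pow : (-1:ℝ)^k = -1)]
      field_simp
      rw [show Real.sqrt 2 ^ 4 = (Real.sqrt 2 * Real.sqrt 2)^2 by ring, hsq]; ring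
  have emid : (-1:ℝ)^m * ((fun i => p i ^ m) ⬝ᵥ T c)^2
      = (if a = m+1 then -(c (H m))^2 else 0) := by
    rw [hval c m (by omega)]
    by_cases hcase : a = m+1
    · have hGm : G m = 1 := by simp [hG, hcase]
      have hodm : Odd m := hev hcase
      rw [hGm, if_pos hcase, hodm.neg_one_pow]
      ring
    · have hGm : G m = 0 := by simp [hG, hcase]
      rw [hGm, if_neg hcase]
      ring
  rw [Finset.sum_congr rfl e1, Finset.sum_congr rfl e2, emid]
  simp only [Finset.sum_const_zero, zero_add]
  -- goal : 0 < ∑ k ∈ range m, c (H k)^2 + (if a = m+1 then c (H m)^2 else 0)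
  obtain ⟨i, hi⟩ : ∃ i, c i ≠ 0 := Function.ne_iff.mp hc
  have hnn : 0 ≤ ∑ k ∈ range m, (c (H k))^2 :=
    Finset.sum_nonneg fun k _ => sq_nonneg _
  have hHi : H (i : ℕ) = i := by
    simp only [hH]
    exact Fin.ext (by simp; omega)
  rcases lt_or_ge (i:ℕ) m with him | him
  · have hle : (c (H (i:ℕ)))^2 ≤ ∑ k ∈ range m, (c (H k))^2 :=
      Finset.single_le_sum (f := fun k => (c (H k))^2) (fun k _ => sq_nonneg _)
        (Finset.mem_range.mpr him)
    rw [hHi] at hle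
    have : 0 < (c i)^2 := by positivity
    have hif : (if a = m+1 then -(c (H m))^2 else 0) ≤ (0:ℝ) := by
      split
      · have h9 : (0:ℝ) ≤ (c (H m))^2 := sq_nonneg _
        linarith
      · exact le_refl 0
    linarith
  · -- i.val = m, so a = m+1
    have hia : (i:ℕ) = m := by omega
    have hcase : a = m+1 := by omega
    rw [if_pos hcase]
    have hHm : H m = i := by rw [← hia, hHi]
    rw [hHm]
    have : 0 < (c i)^2 := by positivity
    linarith
lemma ncard_eq_card' {n : ℕ} (P : Fin n → Prop) [DecidablePred P] :
    {i | P i}.ncard = Fintype.card {i // P i} := by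
  rw [← Nat.card_coe_set_eq, Nat.card_eq_fintype_card]
  exact Fintype.card_congr (Equiv.setCongr rfl)

/-- For `p 0 < p 1 < ⋯ < p (n-1)` positive and `r` an odd positive
integer with `r ≤ n`, the inertia of `K_r` is `(⌈r/2⌉, n - r, ⌊r/2⌋)` if
`r ≡ 1 (mod 4)` and `(⌊r/2⌋, n - r, ⌈r/2⌉)` if `r ≡ 3 (mod 4)`. -/
theorem inertia_kwong_odd_integer {n : ℕ} (p : Fin n → ℝ)
    (hpos : ∀ i, 0 < p i) (hmono : StrictMono p) (r : ℕ) (hodd : Odd r) (hr0 : 0 < r)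
    (hrn : r ≤ n) :
    (r % 4 = 1 → inertia (kwong p (r : ℝ)) (kwong_isHermitian p (r : ℝ)) =
      ((r + 1) / 2, n - r, r / 2)) ∧
    (r % 4 = 3 → inertia (kwong p (r : ℝ)) (kwong_isHermitian p (r : ℝ)) =
      (r / 2, n - r, (r + 1) / 2)) := by
  classical
  obtain ⟨m, hm0⟩ := hodd
  have hm : r = 2*m+1 := by omega
  subst hm
  set hA := kwong_isHermitian p ((2*m+1 : ℕ) : ℝ) with hhA
  have hPN : Fintype.card {i // 0 < hA.eigenvalues i}
      + Fintype.card {i // hA.eigenvalues i < 0}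
      = Fintype.card {i // hA.eigenvalues i ≠ 0} := by
    rw [Fintype.card_subtype, Fintype.card_subtype, Fintype.card_subtype]
    rw [← Finset.card_union_of_disjoint]
    · congr 1
      ext i
      simp only [Finset.mem_union, Finset.mem_filter, Finset.mem_univ, true_and]
      constructor
      · rintro (h | h) <;> [exact ne_of_gt h; exact ne_of_lt h]
      · intro h
        rcases h.lt_or_gt with h' | h'
        · exact Or.inr h'
        · exact Or.inl h'
    · rw [Finset.disjoint_left]
      intro i h1 h2
      simp only [Finset.mem_filter] at h1 h2
      exact absurd h2.2 (not_lt.mpr (le_of_lt h1.2))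
  have hrank : Fintype.card {i // hA.eigenvalues i ≠ 0} ≤ 2*m+1 := by
    rw [← Matrix.IsHermitian.rank_eq_card_non_zero_eigs hA]
    exact kwong_rank' p hpos m
  have hzero : Fintype.card {i // hA.eigenvalues i = 0}
      = n - (Fintype.card {i // 0 < hA.eigenvalues i}
          + Fintype.card {i // hA.eigenvalues i < 0}) := by
    rw [hPN]
    have heq : Fintype.card {i // hA.eigenvalues i ≠ 0}
        = Fintype.card {i // ¬ hA.eigenvalues i = 0} :=
      Fintype.card_congr (Equiv.subtypeEquivRight (fun i => by simp))
    rw [heq]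
    have h9 : Fintype.card {i // hA.eigenvalues i = 0}
        + Fintype.card {i // ¬ hA.eigenvalues i = 0} = n := by
      rw [Fintype.card_subtype, Fintype.card_subtype,
        Finset.card_filter_add_card_filter_not, Finset.card_univ, Fintype.card_fin]
    omega
  have hinertia : inertia (kwong p ((2*m+1:ℕ) : ℝ)) hA
      = (Fintype.card {i // 0 < hA.eigenvalues i},
        Fintype.card {i // hA.eigenvalues i = 0},
        Fintype.card {i // hA.eigenvalues i < 0}) := by
    unfold inertia
    rw [ncard_eq_card' (fun i => 0 < hA.eigenvalues i),
      ncard_eq_card' (fun i => hA.eigenvalues i = 0),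
      ncard_eq_card' (fun i => hA.eigenvalues i < 0)]
  constructor
  · intro hmod
    have hevm : Even m := by
      rw [Nat.even_iff]; omega
    have hPlow : m+1 ≤ Fintype.card {i // 0 < hA.eigenvalues i} :=
      block_pos p hpos hmono hrn hA (by omega) (by omega) (by omega) (fun _ => hevm)
    have hNlow : m ≤ Fintype.card {i // hA.eigenvalues i < 0} := by
      rcases Nat.eq_zero_or_pos m with h | h
      · omega
      · exact block_neg p hpos hmono hrn hA h (le_refl m) (by omega)
          (fun hcon => absurd hcon (by omega))
    have hPeq : Fintype.card {i // 0 < hA.eigenvalues i} = m+1 := by omega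
    have hNeq : Fintype.card {i // hA.eigenvalues i < 0} = m := by omega
    rw [hinertia, hPeq, hNeq, hzero, hPeq, hNeq]
    simp only [Prod.mk.injEq]
    refine ⟨by omega, by omega, by omega⟩
  · intro hmod
    have hodm : Odd m := by
      rw [Nat.odd_iff]; omega
    have hm1 : 1 ≤ m := by
      rcases hodm with ⟨j, hj⟩; omega
    have hPlow : m ≤ Fintype.card {i // 0 < hA.eigenvalues i} :=
      block_pos p hpos hmono hrn hA (by omega) (le_refl m) (by omega)
        (fun hcon => absurd hcon (by omega))
    have hNlow : m+1 ≤ Fintype.card {i // hA.eigenvalues i < 0} :=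
      block_neg p hpos hmono hrn hA (by omega) (by omega) (by omega) (fun _ => hodm)
    have hPeq : Fintype.card {i // 0 < hA.eigenvalues i} = m := by omega
    have hNeq : Fintype.card {i // hA.eigenvalues i < 0} = m+1 := by omega
    rw [hinertia, hPeq, hNeq, hzero, hPeq, hNeq]
    simp only [Prod.mk.injEq]
    refine ⟨by omega, by omega, by omega⟩
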